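/- For each m ∈ ℕ, let S_m be an interval translation map of n intervals with partition points t_k^m and translation constants c_k^m, and let S_* be an interval translation map of n intervals with partition points t_k^* and constants c_k^*. Assume t_k^m → t_k^* and c_k^m → c_k^* as m → ∞ for each k. Let μ_m be an S_m-invariant Borel probability measure for each m, and suppose μ_m converges weak-* to a Borel probability measure μ_*. If μ_*({t_k^*}) = 0 for every k = 0, …, n, then μ_* is an S_*-invariant measure. -/

import Mathlib

open MeasureTheory Set Filter Topology

namespace ITMAux

lemma measure_inter_conull {α} [MeasurableSpace α] (μ : Measure α) {s t : Set α}
    (ht : μ tᶜ = 0) : μ (s ∩ t) = μ s := by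
  refine le_antisymm (measure_mono inter_subset_left) ?_
  calc μ s = μ ((s ∩ t) ∪ (s ∩ tᶜ)) := by rw [← inter_union_distrib_left, union_compl_self,
        inter_univ]
    _ ≤ μ (s ∩ t) + μ (s ∩ tᶜ) := measure_union_le _ _
    _ ≤ μ (s ∩ t) + μ tᶜ := by gcongr; exact inter_subset_right
    _ = μ (s ∩ t) := by rw [ht, add_zero]

lemma mono_of_lt (f : ℕ → ℝ) (n : ℕ) (h : ∀ k, k < n → f k < f (k + 1)) :
    ∀ j k, j ≤ k → k ≤ n → f j ≤ f k := by
  intro j k hjk hkn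
  induction k with
  | zero => simp_all
  | succ k ih =>
    rcases Nat.eq_or_lt_of_le hjk with rfl | hlt
    · exact le_rfl
    · exact (ih (Nat.lt_succ_iff.mp hlt) (le_of_lt (Nat.lt_of_lt_of_le (Nat.lt_succ_self k) hkn))).trans
        (le_of_lt (h k (Nat.lt_of_lt_of_le (Nat.lt_succ_self k) hkn)))

lemma biUnion_Ico_eq (f : ℕ → ℝ) (N : ℕ) (hm : ∀ j k, j ≤ k → k ≤ N → f j ≤ f k) :
    ⋃ j ∈ Finset.range N, Ico (f j) (f (j + 1)) = Ico (f 0) (f N) := by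
  induction N with
  | zero => simp
  | succ N ih =>
    rw [Finset.range_add_one, Finset.set_biUnion_insert, union_comm,
      ih (fun j k hjk hk => hm j k hjk (hk.trans (Nat.le_succ N))),
      Ico_union_Ico_eq_Ico (hm 0 N (Nat.zero_le N) (Nat.le_succ N))
        (hm N (N + 1) (Nat.le_succ N) le_rfl)]

lemma pieces_disjoint (f : ℕ → ℝ) (N : ℕ) (hm : ∀ j k, j ≤ k → k ≤ N → f j ≤ f k) :
    Set.PairwiseDisjoint (↑(Finset.range N) : Set ℕ)
      (fun j => Ico (f j) (f (j + 1))) := by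
  intro i hi j hj hij
  simp only [Finset.coe_range, mem_Iio] at hi hj
  rcases lt_or_gt_of_ne hij with h | h
  · exact Set.Ico_disjoint_Ico.mpr (le_max_of_le_right
      ((min_le_left _ _).trans (hm (i + 1) j h hj.le)))
  · exact Set.Ico_disjoint_Ico.mpr (le_max_of_le_left
      ((min_le_right _ _).trans (hm (j + 1) i h hi.le)))

lemma preimage_Iic_inter (f cc : ℕ → ℝ) (N : ℕ) (g : ℝ → ℝ)
    (hg : ∀ j, j < N → ∀ x ∈ Ico (f j) (f (j + 1)), g x = x + cc (j + 1)) (a : ℝ) :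
    g ⁻¹' Iic a ∩ (⋃ j ∈ Finset.range N, Ico (f j) (f (j + 1)))
      = ⋃ j ∈ Finset.range N, (Ico (f j) (f (j + 1)) ∩ Iic (a - cc (j + 1))) := by
  ext x
  simp only [mem_inter_iff, mem_iUnion, mem_preimage, mem_Iic, Finset.mem_range, exists_prop]
  constructor
  · rintro ⟨hxa, j, hj, hx⟩
    refine ⟨j, hj, hx, ?_⟩
    rw [hg j hj x hx] at hxa; linarith
  · rintro ⟨j, hj, hx, hxa⟩
    exact ⟨by rw [hg j hj x hx]; linarith, j, hj, hx⟩

lemma tendsto_measure_Ico_inter_Iic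
    (ν : ℕ → ProbabilityMeasure ℝ) (νs : ProbabilityMeasure ℝ)
    (hT : Tendsto ν atTop (𝓝 νs))
    {l r s : ℕ → ℝ} {L R V : ℝ}
    (hl : Tendsto l atTop (𝓝 L)) (hr : Tendsto r atTop (𝓝 R))
    (hs : Tendsto s atTop (𝓝 V))
    (hL : (νs : Measure ℝ) {L} = 0) (hR : (νs : Measure ℝ) {R} = 0)
    (hV : (νs : Measure ℝ) {V} = 0) :
    Tendsto (fun m => (ν m : Measure ℝ) (Ico (l m) (r m) ∩ Iic (s m))) atTop
      (𝓝 ((νs : Measure ℝ) (Ico L R ∩ Iic V))) := by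
  have heps : ∀ j : ℕ, (0:ℝ) < 1 / (j + 1) := fun j => by positivity
  set C : ℕ → Set ℝ := fun j => Icc (L - 1/(j+1)) (R + 1/(j+1)) ∩ Iic (V + 1/(j+1)) with hC
  set U : ℕ → Set ℝ := fun j => Ioo (L + 1/(j+1)) (R - 1/(j+1)) ∩ Iio (V - 1/(j+1)) with hU
  have hmono : ∀ j k : ℕ, j ≤ k → (1:ℝ)/(k+1) ≤ 1/(j+1) := by
    intro j k hjk
    apply one_div_le_one_div_of_le (by positivity)
    have : (j:ℝ) ≤ k := Nat.cast_le.mpr hjk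
    linarith
  -- limsup bound
  have hup : ∀ j : ℕ, (atTop.limsup fun m => (ν m : Measure ℝ) (Ico (l m) (r m) ∩ Iic (s m)))
      ≤ (νs : Measure ℝ) (C j) := by
    intro j
    have hev : ∀ᶠ m in atTop, Ico (l m) (r m) ∩ Iic (s m) ⊆ C j := by
      filter_upwards [hl.eventually (eventually_gt_nhds (by linarith [heps j] : L - 1/(j+1) < L)),
        hr.eventually (eventually_lt_nhds (by linarith [heps j] : R < R + 1/(j+1))),
        hs.eventually (eventually_lt_nhds (by linarith [heps j] : V < V + 1/(j+1)))]
        with m h1 h2 h3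
      rintro x ⟨⟨hx1, hx2⟩, hx3⟩
      exact ⟨⟨h1.le.trans hx1, hx2.le.trans h2.le⟩, le_trans hx3 h3.le⟩
    calc (atTop.limsup fun m => (ν m : Measure ℝ) (Ico (l m) (r m) ∩ Iic (s m)))
        ≤ atTop.limsup fun m => (ν m : Measure ℝ) (C j) :=
          limsup_le_limsup (hev.mono fun m hm => measure_mono hm)
      _ ≤ (νs : Measure ℝ) (C j) :=
          ProbabilityMeasure.limsup_measure_closed_le_of_tendsto hT
            ((isClosed_Icc.inter isClosed_Iic))
  have hCtend : Tendsto (fun j => (νs : Measure ℝ) (C j)) atTop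
      (𝓝 ((νs : Measure ℝ) (⋂ j, C j))) := by
    have := tendsto_measure_iInter_atTop (μ := (νs : Measure ℝ)) (s := C)
      (fun j => ((measurableSet_Icc.inter measurableSet_Iic)).nullMeasurableSet)
      (fun j k hjk => inter_subset_inter
        (Icc_subset_Icc (by linarith [hmono j k hjk]) (by linarith [hmono j k hjk]))
        (Iic_subset_Iic.mpr (by linarith [hmono j k hjk])))
      ⟨0, measure_ne_top _ _⟩
    exact this
  have hCinter : (⋂ j, C j) = Icc L R ∩ Iic V := by
    apply Subset.antisymm
    · intro x hx
      simp only [mem_iInter, hC, mem_inter_iff, mem_Icc, mem_Iic] at hx ⊢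
      have h1 : L ≤ x := by
        by_contra hcon
        push_neg at hcon
        obtain ⟨j, hj⟩ := exists_nat_one_div_lt (by linarith : (0:ℝ) < L - x)
        have := (hx j).1.1
        push_cast at hj ⊢
        linarith
      have h2 : x ≤ R := by
        by_contra hcon
        push_neg at hcon
        obtain ⟨j, hj⟩ := exists_nat_one_div_lt (by linarith : (0:ℝ) < x - R)
        have := (hx j).1.2
        push_cast at hj ⊢
        linarith
      have h3 : x ≤ V := by
        by_contra hcon
        push_neg at hcon
        obtain ⟨j, hj⟩ := exists_nat_one_div_lt (by linarith : (0:ℝ) < x - V)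
        have := (hx j).2
        push_cast at hj ⊢
        linarith
      exact ⟨⟨h1, h2⟩, h3⟩
    · intro x hx
      simp only [mem_iInter, hC, mem_inter_iff, mem_Icc, mem_Iic] at hx ⊢
      intro j
      obtain ⟨⟨h1, h2⟩, h3⟩ := hx
      exact ⟨⟨by linarith [heps j], by linarith [heps j]⟩, by linarith [heps j]⟩
  have hCeq : (νs : Measure ℝ) (Icc L R ∩ Iic V) = (νs : Measure ℝ) (Ico L R ∩ Iic V) := by
    apply le_antisymm
    · calc (νs : Measure ℝ) (Icc L R ∩ Iic V)
          ≤ (νs : Measure ℝ) ((Ico L R ∩ Iic V) ∪ {R}) := by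
            apply measure_mono
            rintro x ⟨⟨hx1, hx2⟩, hx3⟩
            rcases eq_or_lt_of_le hx2 with rfl | h
            · exact Or.inr rfl
            · exact Or.inl ⟨⟨hx1, h⟩, hx3⟩
        _ ≤ (νs : Measure ℝ) (Ico L R ∩ Iic V) + (νs : Measure ℝ) {R} := measure_union_le _ _
        _ = (νs : Measure ℝ) (Ico L R ∩ Iic V) := by rw [hR, add_zero]
    · exact measure_mono (inter_subset_inter_left _ Ico_subset_Icc_self)
  -- liminf bound
  have hlow : ∀ j : ℕ, (νs : Measure ℝ) (U j)
      ≤ atTop.liminf fun m => (ν m : Measure ℝ) (Ico (l m) (r m) ∩ Iic (s m)) := by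
    intro j
    have hev : ∀ᶠ m in atTop, U j ⊆ Ico (l m) (r m) ∩ Iic (s m) := by
      filter_upwards [hl.eventually (eventually_lt_nhds (by linarith [heps j] : L < L + 1/(j+1))),
        hr.eventually (eventually_gt_nhds (by linarith [heps j] : R - 1/(j+1) < R)),
        hs.eventually (eventually_gt_nhds (by linarith [heps j] : V - 1/(j+1) < V))]
        with m h1 h2 h3
      rintro x ⟨⟨hx1, hx2⟩, hx3⟩
      exact ⟨⟨le_of_lt (h1.trans hx1), hx2.trans h2⟩, (hx3.trans h3).le⟩
    calc (νs : Measure ℝ) (U j)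
        ≤ atTop.liminf fun m => (ν m : Measure ℝ) (U j) :=
          ProbabilityMeasure.le_liminf_measure_open_of_tendsto hT
            ((isOpen_Ioo.inter isOpen_Iio))
      _ ≤ atTop.liminf fun m => (ν m : Measure ℝ) (Ico (l m) (r m) ∩ Iic (s m)) :=
          liminf_le_liminf (hev.mono fun m hm => measure_mono hm)
  have hUtend : Tendsto (fun j => (νs : Measure ℝ) (U j)) atTop
      (𝓝 ((νs : Measure ℝ) (⋃ j, U j))) := by
    have := tendsto_measure_iUnion_atTop (μ := (νs : Measure ℝ)) (s := U)
      (fun j k hjk => inter_subset_inter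
        (Ioo_subset_Ioo (by linarith [hmono j k hjk]) (by linarith [hmono j k hjk]))
        (Iio_subset_Iio (by linarith [hmono j k hjk])))
    exact this
  have hUunion : (⋃ j, U j) = Ioo L R ∩ Iio V := by
    apply Subset.antisymm
    · rintro x hx
      simp only [mem_iUnion, hU, mem_inter_iff, mem_Ioo, mem_Iio] at hx ⊢
      obtain ⟨j, ⟨h1, h2⟩, h3⟩ := hx
      exact ⟨⟨by linarith [heps j], by linarith [heps j]⟩, by linarith [heps j]⟩
    · rintro x ⟨⟨h1, h2⟩, h3⟩
      have h3' : x < V := h3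
      simp only [mem_iUnion, hU, mem_inter_iff, mem_Ioo, mem_Iio]
      obtain ⟨j1, hj1⟩ := exists_nat_one_div_lt (by linarith : (0:ℝ) < x - L)
      obtain ⟨j2, hj2⟩ := exists_nat_one_div_lt (by linarith : (0:ℝ) < R - x)
      obtain ⟨j3, hj3⟩ := exists_nat_one_div_lt (by linarith [h3'] : (0:ℝ) < V - x)
      refine ⟨max j1 (max j2 j3), ⟨?_, ?_⟩, ?_⟩
      · have := hmono j1 (max j1 (max j2 j3)) (le_max_left _ _)
        push_cast at hj1 this ⊢; linarith
      · have := hmono j2 (max j1 (max j2 j3)) ((le_max_left _ _).trans (le_max_right _ _))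
        push_cast at hj2 this ⊢; linarith
      · have := hmono j3 (max j1 (max j2 j3)) ((le_max_right _ _).trans (le_max_right _ _))
        push_cast at hj3 this ⊢; linarith
  have hUeq : (νs : Measure ℝ) (Ioo L R ∩ Iio V) = (νs : Measure ℝ) (Ico L R ∩ Iic V) := by
    apply le_antisymm
    · exact measure_mono (inter_subset_inter Ioo_subset_Ico_self Iio_subset_Iic_self)
    · calc (νs : Measure ℝ) (Ico L R ∩ Iic V)
          ≤ (νs : Measure ℝ) ((Ioo L R ∩ Iio V) ∪ ({L} ∪ {V})) := by
            apply measure_mono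
            rintro x ⟨⟨hx1, hx2⟩, hx3⟩
            rcases eq_or_lt_of_le hx1 with rfl | h1
            · exact Or.inr (Or.inl rfl)
            have hx3' : x ≤ V := hx3
            rcases eq_or_lt_of_le hx3' with rfl | h3
            · exact Or.inr (Or.inr rfl)
            exact Or.inl ⟨⟨h1, hx2⟩, h3⟩
        _ ≤ (νs : Measure ℝ) (Ioo L R ∩ Iio V) + (νs : Measure ℝ) ({L} ∪ {V}) :=
            measure_union_le _ _
        _ ≤ (νs : Measure ℝ) (Ioo L R ∩ Iio V) + ((νs : Measure ℝ) {L} + (νs : Measure ℝ) {V}) :=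
            by gcongr; exact measure_union_le _ _
        _ = (νs : Measure ℝ) (Ioo L R ∩ Iio V) := by rw [hL, hV, add_zero, add_zero]
  apply tendsto_of_le_liminf_of_limsup_le
  · rw [← hUeq, ← hUunion]
    exact le_of_tendsto' hUtend hlow
  · rw [← hCeq, ← hCinter]
    exact ge_of_tendsto' hCtend hup
  · isBoundedDefault
  · isBoundedDefault

end ITMAux


/-- **Theorem 2 of the paper.** Let `S m` be interval translation maps of
`n` intervals with parameters `t m k`, `c m k` converging (as `m → ∞`) to the parameters
`tstar k`, `cstar k` of an ITM `Sstar`. Let `μ m` be an `S m`-invariant Borel probability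
measure, and suppose `μ m` converges weak-* to a probability measure `μstar`. If
`μstar {tstar k} = 0` for every `k`, then `μstar` is `Sstar`-invariant. -/
theorem itm_limit_of_invariant_measures
    (n : ℕ) (hn : 0 < n)
    (t c : ℕ → ℕ → ℝ) (S : ℕ → ℝ → ℝ)
    (tstar cstar : ℕ → ℝ) (Sstar : ℝ → ℝ)
    -- each `S m` is an ITM with parameters `t m`, `c m`
    (ht0 : ∀ m, t m 0 = 0) (htn : ∀ m, t m n = 1)
    (htmono : ∀ m, ∀ k, k < n → t m k < t m (k + 1))
    (hc : ∀ m, ∀ k, 1 ≤ k → k ≤ n → 0 ≤ t m (k - 1) + c m k ∧ t m k + c m k ≤ 1)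
    (hS : ∀ m, ∀ k, 1 ≤ k → k ≤ n →
      ∀ x ∈ Ico (t m (k - 1)) (t m k), S m x = x + c m k)
    -- `Sstar` is an ITM with parameters `tstar`, `cstar`
    (htstar0 : tstar 0 = 0) (htstarn : tstar n = 1)
    (htstarmono : ∀ k, k < n → tstar k < tstar (k + 1))
    (hcstar : ∀ k, 1 ≤ k → k ≤ n → 0 ≤ tstar (k - 1) + cstar k ∧ tstar k + cstar k ≤ 1)
    (hSstar : ∀ k, 1 ≤ k → k ≤ n →
      ∀ x ∈ Ico (tstar (k - 1)) (tstar k), Sstar x = x + cstar k)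
    -- convergence of the parameters
    (htconv : ∀ k, k ≤ n → Tendsto (fun m => t m k) atTop (nhds (tstar k)))
    (hcconv : ∀ k, 1 ≤ k → k ≤ n → Tendsto (fun m => c m k) atTop (nhds (cstar k)))
    -- invariant probability measures `μ m` of `S m`
    (μ : ℕ → Measure ℝ) (hμprob : ∀ m, IsProbabilityMeasure (μ m))
    (hμsupp : ∀ m, μ m (Ico (0 : ℝ) 1) = 1)
    (hμinv : ∀ m, ∀ A : Set ℝ, MeasurableSet A → μ m (S m ⁻¹' A) = μ m A)
    -- weak-* convergence `μ m → μstar`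
    (μstar : Measure ℝ) (hstarprob : IsProbabilityMeasure μstar)
    (hconv : ∀ φ : ℝ → ℝ, Continuous φ →
      Tendsto (fun m => ∫ x, φ x ∂(μ m)) atTop (nhds (∫ x, φ x ∂μstar)))
    -- the limit measure has no atoms at the discontinuity points of `Sstar`
    (hatoms : ∀ k, k ≤ n → μstar {tstar k} = 0) :
    ∀ A : Set ℝ, MeasurableSet A → μstar (Sstar ⁻¹' A) = μstar A := by
  classical
  set ν : ℕ → ProbabilityMeasure ℝ := fun m => ⟨μ m, hμprob m⟩ with hν
  set νs : ProbabilityMeasure ℝ := ⟨μstar, hstarprob⟩ with hνs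
  have hT : Tendsto ν atTop (𝓝 νs) := by
    rw [ProbabilityMeasure.tendsto_iff_forall_integral_tendsto]
    exact fun f => hconv f f.continuous
  have hμconull : ∀ m, μ m (Ico (0:ℝ) 1)ᶜ = 0 := by
    intro m
    haveI := hμprob m
    rw [measure_compl measurableSet_Ico (measure_ne_top _ _), hμsupp m, measure_univ]
    simp
  have hone : μstar {(1:ℝ)} = 0 := htstarn ▸ hatoms n le_rfl
  have hIcccompl : μstar (Icc (0:ℝ) 1)ᶜ = 0 := by
    have hopen : μstar ((Icc (0:ℝ) 1)ᶜ) ≤ atTop.liminf (fun m => μ m ((Icc (0:ℝ) 1)ᶜ)) :=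
      ProbabilityMeasure.le_liminf_measure_open_of_tendsto hT isClosed_Icc.isOpen_compl
    have hzero : ∀ m, μ m ((Icc (0:ℝ) 1)ᶜ) = 0 := fun m =>
      measure_mono_null (compl_subset_compl.mpr Ico_subset_Icc_self) (hμconull m)
    refine le_antisymm ?_ zero_le
    calc μstar ((Icc (0:ℝ) 1)ᶜ) ≤ atTop.liminf (fun m => μ m ((Icc (0:ℝ) 1)ᶜ)) := hopen
      _ = 0 := by simp [hzero, liminf_const]
  have hstarconull : μstar (Ico (0:ℝ) 1)ᶜ = 0 := by
    apply measure_mono_null (t := (Icc (0:ℝ) 1)ᶜ ∪ {1}) ?_ (measure_union_null hIcccompl hone)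
    intro x hx
    by_cases h : x ∈ Icc (0:ℝ) 1
    · right
      simp only [mem_compl_iff, mem_Ico, not_and, not_lt] at hx
      obtain ⟨h1, h2⟩ := h
      exact le_antisymm h2 (hx h1)
    · exact Or.inl h
  have htsm := ITMAux.mono_of_lt tstar n htstarmono
  have htm : ∀ m, ∀ j k, j ≤ k → k ≤ n → t m j ≤ t m k := fun m =>
    ITMAux.mono_of_lt (t m) n (htmono m)
  -- the measurable modification of Sstar
  set T : ℝ → ℝ := fun x =>
    x + ∑ j ∈ Finset.range n, (Ico (tstar j) (tstar (j+1))).indicator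
      (fun _ => cstar (j+1)) x with hTdef
  have hTmeas : Measurable T := by
    apply Measurable.add measurable_id
    exact Finset.measurable_sum _
      (fun j _ => Measurable.indicator measurable_const measurableSet_Ico)
  have hTpiece : ∀ j, j < n → ∀ x ∈ Ico (tstar j) (tstar (j+1)), T x = x + cstar (j+1) := by
    intro j hj x hx
    have hsum : ∑ i ∈ Finset.range n,
        (Ico (tstar i) (tstar (i+1))).indicator (fun _ => cstar (i+1)) x = cstar (j+1) := by
      rw [Finset.sum_eq_single j]
      · rw [indicator_of_mem hx]
      · intro i hi hij
        apply indicator_of_notMem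
        intro hxi
        exact Set.disjoint_left.mp
          (ITMAux.pieces_disjoint tstar n htsm (Finset.mem_coe.mpr hi)
            (Finset.mem_coe.mpr (Finset.mem_range.mpr hj)) hij) hxi hx
      · intro hj'
        exact absurd (Finset.mem_range.mpr hj) hj'
    simp only [hTdef]
    rw [hsum]
  have hSpiece : ∀ m, ∀ j, j < n → ∀ x ∈ Ico (t m j) (t m (j+1)), S m x = x + c m (j+1) := by
    intro m j hj x hx
    have := hS m (j+1) (Nat.succ_le_succ (Nat.zero_le j)) (Nat.succ_le_of_lt hj) x (by simpa using hx)
    simpa using this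
  have hSstarpiece : ∀ j, j < n → ∀ x ∈ Ico (tstar j) (tstar (j+1)),
      Sstar x = x + cstar (j+1) := by
    intro j hj x hx
    have := hSstar (j+1) (Nat.succ_le_succ (Nat.zero_le j)) (Nat.succ_le_of_lt hj) x
      (by simpa using hx)
    simpa using this
  have hST : ∀ x ∈ Ico (0:ℝ) 1, T x = Sstar x := by
    intro x hx
    have hx' : x ∈ ⋃ j ∈ Finset.range n, Ico (tstar j) (tstar (j+1)) := by
      rw [ITMAux.biUnion_Ico_eq tstar n htsm, htstar0, htstarn]
      exact hx
    simp only [mem_iUnion, Finset.mem_range, exists_prop] at hx'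
    obtain ⟨j, hj, hxj⟩ := hx'
    rw [hTpiece j hj x hxj, hSstarpiece j hj x hxj]
  haveI : IsProbabilityMeasure (Measure.map T μstar) :=
    Measure.isProbabilityMeasure_map hTmeas.aemeasurable
  -- the key computation at good points a
  have hkey : ∀ a : ℝ, μstar {a} = 0 → (∀ j, j < n → μstar {a - cstar (j+1)} = 0) →
      Measure.map T μstar (Iic a) = μstar (Iic a) := by
    intro a ha haj
    have hdecomp : ∀ m, μ m (Iic a)
        = ∑ j ∈ Finset.range n, μ m (Ico (t m j) (t m (j+1)) ∩ Iic (a - c m (j+1))) := by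
      intro m
      rw [← hμinv m (Iic a) measurableSet_Iic,
        ← ITMAux.measure_inter_conull (μ m) (hμconull m)]
      have hIco : Ico (0:ℝ) 1 = ⋃ j ∈ Finset.range n, Ico (t m j) (t m (j+1)) := by
        rw [ITMAux.biUnion_Ico_eq (t m) n (htm m), ht0 m, htn m]
      rw [hIco, ITMAux.preimage_Iic_inter (t m) (c m) n (S m) (hSpiece m) a]
      exact measure_biUnion_finset
        (fun i hi j hj hij => ((ITMAux.pieces_disjoint (t m) n (htm m)) hi hj hij).mono
          inter_subset_left inter_subset_left)
        (fun j _ => measurableSet_Ico.inter measurableSet_Iic)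
    have hstardecomp : Measure.map T μstar (Iic a)
        = ∑ j ∈ Finset.range n, μstar (Ico (tstar j) (tstar (j+1)) ∩ Iic (a - cstar (j+1))) := by
      rw [Measure.map_apply hTmeas measurableSet_Iic,
        ← ITMAux.measure_inter_conull μstar hstarconull]
      have hIco : Ico (0:ℝ) 1 = ⋃ j ∈ Finset.range n, Ico (tstar j) (tstar (j+1)) := by
        rw [ITMAux.biUnion_Ico_eq tstar n htsm, htstar0, htstarn]
      rw [hIco, ITMAux.preimage_Iic_inter tstar cstar n T hTpiece a]
      exact measure_biUnion_finset
        (fun i hi j hj hij => ((ITMAux.pieces_disjoint tstar n htsm) hi hj hij).mono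
          inter_subset_left inter_subset_left)
        (fun j _ => measurableSet_Ico.inter measurableSet_Iic)
    have hlim1 : Tendsto (fun m => μ m (Iic a)) atTop (𝓝 (μstar (Iic a))) := by
      have := ProbabilityMeasure.tendsto_measure_of_null_frontier_of_tendsto' hT
        (E := Iic a) (by rw [frontier_Iic]; exact ha)
      exact this
    have hlim2 : Tendsto
        (fun m => ∑ j ∈ Finset.range n, μ m (Ico (t m j) (t m (j+1)) ∩ Iic (a - c m (j+1))))
        atTop
        (𝓝 (∑ j ∈ Finset.range n,
          μstar (Ico (tstar j) (tstar (j+1)) ∩ Iic (a - cstar (j+1))))) := by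
      apply tendsto_finset_sum
      intro j hj
      have hjn : j < n := Finset.mem_range.mp hj
      exact ITMAux.tendsto_measure_Ico_inter_Iic ν νs hT (htconv j hjn.le)
        (htconv (j+1) (Nat.succ_le_of_lt hjn))
        (tendsto_const_nhds.sub (hcconv (j+1) (Nat.succ_le_succ (Nat.zero_le j))
          (Nat.succ_le_of_lt hjn)))
        (hatoms j hjn.le) (hatoms (j+1) (Nat.succ_le_of_lt hjn)) (haj j hjn)
    have hlim2' : Tendsto (fun m => μ m (Iic a)) atTop
        (𝓝 (∑ j ∈ Finset.range n,
          μstar (Ico (tstar j) (tstar (j+1)) ∩ Iic (a - cstar (j+1))))) := by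
      rw [show (fun m => μ m (Iic a))
        = fun m => ∑ j ∈ Finset.range n, μ m (Ico (t m j) (t m (j+1)) ∩ Iic (a - c m (j+1)))
        from funext hdecomp]
      exact hlim2
    exact hstardecomp.trans (tendsto_nhds_unique hlim2' hlim1)
  -- countability of the bad set
  set Bad : Set ℝ := {x : ℝ | μstar {x} ≠ 0} with hBadDef
  have hBad : Bad.Countable := by
    have h := Measure.countable_meas_pos_of_disjoint_iUnion (μ := μstar)
      (As := fun x : ℝ => {x}) (fun x => measurableSet_singleton x)
      (fun x y hxy => Set.disjoint_singleton.mpr hxy)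
    apply h.mono
    intro x hx
    simp only [hBadDef, mem_setOf_eq] at hx ⊢
    exact pos_iff_ne_zero.mpr hx
  set BadAll : Set ℝ := Bad ∪ ⋃ j ∈ Finset.range n, (fun x => x + cstar (j+1)) '' Bad
    with hBadAllDef
  have hBadAll : BadAll.Countable :=
    hBad.union (Set.Countable.biUnion (Finset.range n).countable_toSet
      (fun j _ => hBad.image _))
  have hGood : ∀ a, a ∉ BadAll → μstar {a} = 0 ∧ ∀ j, j < n → μstar {a - cstar (j+1)} = 0 := by
    intro a ha
    simp only [hBadAllDef, mem_union, not_or] at ha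
    obtain ⟨ha1, ha2⟩ := ha
    constructor
    · by_contra h
      exact ha1 h
    · intro j hj
      by_contra h
      apply ha2
      simp only [mem_iUnion, Finset.mem_range, exists_prop]
      exact ⟨j, hj, ⟨a - cstar (j+1), h, by ring⟩⟩
  have hdense : Dense BadAllᶜ := Set.Countable.dense_compl ℝ hBadAll
  -- extend the key identity to all a by right-continuity
  have hIic : ∀ a : ℝ, Measure.map T μstar (Iic a) = μstar (Iic a) := by
    intro a
    have hpick : ∀ k : ℕ, ∃ g, g ∈ BadAllᶜ ∧ g ∈ Ioo a (a + 1/(k+1)) := by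
      intro k
      have hne : (Ioo a (a + 1/(k+1) : ℝ)).Nonempty := by
        apply nonempty_Ioo.mpr
        have : (0:ℝ) < 1/(k+1) := by positivity
        linarith
      exact hdense.exists_mem_open isOpen_Ioo hne
    choose g hg using hpick
    set H : ℕ → ℝ := fun k => ((Finset.range (k+1)).image g).min' (by simp) with hHdef
    have hHmem : ∀ k, ∃ i, H k = g i := by
      intro k
      have := Finset.min'_mem ((Finset.range (k+1)).image g) (by simp)
      simp only [Finset.mem_image] at this
      obtain ⟨i, _, hi⟩ := this
      exact ⟨i, hi.symm⟩
    have hHgt : ∀ k, a < H k := by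
      intro k
      obtain ⟨i, hi⟩ := hHmem k
      rw [hi]
      exact (hg i).2.1
    have hHle : ∀ k, H k ≤ g k := fun k =>
      Finset.min'_le _ _ (Finset.mem_image_of_mem g (Finset.self_mem_range_succ k))
    have hHanti : ∀ j k, j ≤ k → H k ≤ H j := fun j k h =>
      Finset.min'_subset _ (Finset.image_subset_image
        (Finset.range_subset_range.mpr (by omega)))
    have hHtend : Tendsto H atTop (𝓝 a) := by
      have hup : Tendsto (fun k : ℕ => a + 1/(k+1 : ℝ)) atTop (𝓝 a) := by
        have := tendsto_one_div_add_atTop_nhds_zero_nat (𝕜 := ℝ)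
        have h2 := tendsto_const_nhds (x := a) (f := atTop (α := ℕ)) |>.add this
        simpa using h2
      exact tendsto_of_tendsto_of_tendsto_of_le_of_le (tendsto_const_nhds)
        hup (fun k => (hHgt k).le) (fun k => (hHle k).trans (hg k).2.2.le)
    have hiInter : ⋂ k, Iic (H k) = Iic a := by
      ext x
      simp only [mem_iInter, mem_Iic]
      constructor
      · intro h
        exact ge_of_tendsto' hHtend h
      · intro h k
        exact h.trans (hHgt k).le
    have h1 := tendsto_measure_iInter_atTop (μ := Measure.map T μstar)
      (s := fun k => Iic (H k)) (fun k => measurableSet_Iic.nullMeasurableSet)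
      (fun j k hjk => Iic_subset_Iic.mpr (hHanti j k hjk)) ⟨0, measure_ne_top _ _⟩
    have h2 := tendsto_measure_iInter_atTop (μ := μstar)
      (s := fun k => Iic (H k)) (fun k => measurableSet_Iic.nullMeasurableSet)
      (fun j k hjk => Iic_subset_Iic.mpr (hHanti j k hjk)) ⟨0, measure_ne_top _ _⟩
    rw [hiInter] at h1 h2
    have heq : (fun k => Measure.map T μstar (Iic (H k))) = fun k => μstar (Iic (H k)) := by
      funext k
      obtain ⟨i, hi⟩ := hHmem k
      rw [hi]
      obtain ⟨hh1, hh2⟩ := hGood (g i) (hg i).1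
      exact hkey (g i) hh1 hh2
    have h1' : Tendsto (fun k => μstar (Iic (H k))) atTop (𝓝 (Measure.map T μstar (Iic a))) := by
      rw [← heq]
      exact h1
    exact tendsto_nhds_unique h1' h2
  have hmap : Measure.map T μstar = μstar := Measure.ext_of_Iic _ _ hIic
  intro A hA
  have hsets : Sstar ⁻¹' A ∩ Ico 0 1 = T ⁻¹' A ∩ Ico 0 1 := by
    ext x
    simp only [mem_inter_iff, mem_preimage]
    constructor
    · rintro ⟨h, hx⟩
      refine ⟨?_, hx⟩
      rw [hST x hx]
      exact h
    · rintro ⟨h, hx⟩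
      refine ⟨?_, hx⟩
      rw [← hST x hx]
      exact h
  calc μstar (Sstar ⁻¹' A) = μstar (Sstar ⁻¹' A ∩ Ico 0 1) :=
        (ITMAux.measure_inter_conull μstar hstarconull).symm
    _ = μstar (T ⁻¹' A ∩ Ico 0 1) := by rw [hsets]
    _ = μstar (T ⁻¹' A) := ITMAux.measure_inter_conull μstar hstarconull
    _ = Measure.map T μstar A := (Measure.map_apply hTmeas hA).symm
    _ = μstar A := by rw [hmap]
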